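/- Let G be a simple graph and F a field over which Z₂(G) is representable. Then there is a V(G)×V(G) matrix A over F with these properties: (1) A has nonzero entries in precisely the same positions where the adjacency matrix A(G) has nonzero entries; and (2) the matrix (I | A), with I an identity matrix, represents a matroid that shelters Z₂(G), with the columns of I and A corresponding to the φ and χ elements, respectively. -/

import Mathlib

open Matrix

noncomputable section

/-- The rank over `F` of the set of columns of `M` indexed by `S`. -/
def colSpanRank (F : Type*) [Field F] {m n : Type*} (M : Matrix m n F) (S : Set n) : ℕ :=
  Module.finrank F ↥(Submodule.span F ((fun j i => M i j) '' S))

/-- A subtransversal of `W₂(G) = V × {φ,χ}`: at most one element of each pair. -/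
def Subtransversal2 {V : Type*} (S : Set (V × Fin 2)) : Prop :=
  ∀ v i j, (v, i) ∈ S → (v, j) ∈ S → i = j

/-- The matrix `IA(G) = (I | A)` over GF(2); the columns `(v,0)` and `(v,1)` are
`φ_G(v)` and `χ_G(v)` respectively. -/
def IAmat {V : Type*} [DecidableEq V] (A : Matrix V V (ZMod 2)) :
    Matrix V (V × Fin 2) (ZMod 2) :=
  Matrix.of fun v p => if p.2 = 0 then (if v = p.1 then 1 else 0) else A v p.1

/-- The isotropic 2-matroid `Z₂(G)` is representable over `F`. -/
def Z2Rep (F : Type*) [Field F] {V : Type*} [Fintype V] [DecidableEq V]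
    (A : Matrix V V (ZMod 2)) : Prop :=
  ∃ (k : ℕ) (P : Matrix (Fin k) (V × Fin 2) F),
    ∀ S : Set (V × Fin 2), Subtransversal2 S →
      colSpanRank F P S = colSpanRank (ZMod 2) (IAmat A) S


/-- The matrix `(I | A')` over an arbitrary field, columns indexed by `V × {φ,χ}`. -/
def IAmatF (F : Type*) [Field F] {V : Type*} [DecidableEq V] (A' : Matrix V V F) :
    Matrix V (V × Fin 2) F :=
  Matrix.of fun v p => if p.2 = 0 then (if v = p.1 then 1 else 0) else A' v p.1

namespace Z2Aux

variable {K : Type} [Field K] {V : Type} [Fintype V] [DecidableEq V]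

/-- standard basis vector -/
def sing (K : Type) [Field K] {V : Type} [DecidableEq V] (v : V) : V → K := Pi.single v 1

lemma sing_apply (v u : V) : sing K v u = if u = v then (1 : K) else 0 :=
  Pi.single_apply v 1 u

lemma sing_injective : Function.Injective (sing K (V := V)) := by
  intro a b hab
  by_contra h
  have := congrFun hab a
  rw [sing_apply, sing_apply, if_pos rfl, if_neg h] at this
  exact one_ne_zero this

lemma indep_sing (T : Set V) :
    LinearIndependent K ((↑) : (sing K '' T : Set (V → K)) → (V → K)) := by
  have h1 : LinearIndependent K (sing K (V := V)) := by
    have h := (Pi.basisFun K V).linearIndependent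
    have e : ⇑(Pi.basisFun K V) = sing K (V := V) := by
      funext v; rw [Pi.basisFun_apply]; rfl
    rwa [e] at h
  exact ((linearIndepOn_id_range_iff sing_injective).mpr h1).mono (Set.image_subset_range _ _)

lemma indep_sing_fun : LinearIndependent K (sing K (V := V)) := by
  have h := (Pi.basisFun K V).linearIndependent
  have e : ⇑(Pi.basisFun K V) = sing K (V := V) := by
    funext v; rw [Pi.basisFun_apply]; rfl
  rwa [e] at h

lemma finrank_span_sing (T : Set V) :
    Module.finrank K ↥(Submodule.span K (sing K '' T)) = T.ncard := by
  haveI : Fintype ↥T := (Set.toFinite T).fintype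
  have himg : sing K '' T = Set.range ((sing K (V := V)) ∘ (Subtype.val : T → V)) := by
    rw [Set.image_eq_range]; rfl
  have hi := (indep_sing_fun (K := K)).comp (Subtype.val : T → V) Subtype.val_injective
  have hcard : Fintype.card ↥T = T.ncard := by
    rw [← Nat.card_eq_fintype_card, Nat.card_coe_set_eq]
  rw [himg, finrank_span_eq_card hi]
  exact hcard

lemma mem_span_sing {T : Set V} {x : V → K} (h : ∀ v, x v ≠ 0 → v ∈ T) :
    x ∈ Submodule.span K (sing K '' T) := by
  have hx : x = ∑ v, Pi.single v (x v) := (Finset.univ_sum_single x).symm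
  rw [hx]
  refine Submodule.sum_mem _ fun v _ => ?_
  by_cases hv : x v = 0
  · rw [hv, Pi.single_zero]; exact Submodule.zero_mem _
  · have hs : Pi.single v (x v) = x v • sing K v := by
      funext u
      by_cases hu : u = v
      · subst hu; simp [sing]
      · simp [sing, Pi.single_apply, hu]
    rw [hs]
    exact Submodule.smul_mem _ _ (Submodule.subset_span ⟨v, h v hv, rfl⟩)

lemma finrank_span_insert_dep {T : Set V} {x : V → K} (h : ∀ v, x v ≠ 0 → v ∈ T) :
    Module.finrank K ↥(Submodule.span K (insert x (sing K '' T))) = T.ncard := by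
  rw [Submodule.span_insert_eq_span (mem_span_sing h), finrank_span_sing]

lemma finrank_span_insert_indep {T : Set V} {x : V → K} {w : V} (hw : w ∉ T) (hxw : x w ≠ 0) :
    Module.finrank K ↥(Submodule.span K (insert x (sing K '' T))) = T.ncard + 1 := by
  have hker : Submodule.span K (sing K '' T) ≤
      LinearMap.ker (LinearMap.proj (R := K) (φ := fun _ : V => K) w) := by
    rw [Submodule.span_le]
    rintro y ⟨v, hv, rfl⟩
    have hvw : w ≠ v := fun h => hw (by rw [h]; exact hv)
    simp [LinearMap.mem_ker, sing_apply, if_neg hvw]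
  have hxs : x ∉ Submodule.span K (sing K '' T) := fun hx => hxw (by simpa using hker hx)
  have hx0 : x ≠ 0 := fun h => hxw (by rw [h]; rfl)
  have hdis : Disjoint (Submodule.span K (sing K '' T)) (Submodule.span K {x}) :=
    (Submodule.disjoint_span_singleton' hx0).mpr hxs
  rw [Submodule.span_insert]
  have hsum := Submodule.finrank_sup_add_finrank_inf_eq
    (Submodule.span K ({x} : Set (V → K))) (Submodule.span K (sing K '' T))
  rw [inf_comm, disjoint_iff.mp hdis, finrank_bot, add_zero,
    finrank_span_singleton hx0, finrank_span_sing] at hsum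
  rw [hsum, Nat.add_comm]

lemma col0 (B : Matrix V V K) (u : V) :
    (fun i => IAmatF K B i (u, (0 : Fin 2))) = sing K u := by
  funext i
  show (if ((0 : Fin 2) = 0) then (if i = u then (1 : K) else 0) else B i u) = _
  rw [if_pos rfl, sing_apply]

lemma col1 (B : Matrix V V K) (u : V) :
    (fun i => IAmatF K B i (u, (1 : Fin 2))) = fun i => B i u := by
  funext i
  show (if ((1 : Fin 2) = 0) then (if i = u then (1 : K) else 0) else B i u) = B i u
  rw [if_neg (by decide)]

/-- the set of `φ` columns indexed by `T` -/
def phiSet {V : Type} (T : Set V) : Set (V × Fin 2) := (fun u => (u, (0 : Fin 2))) '' T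

/-- `φ` columns indexed by `T` together with the `χ` column of `v` -/
def chiInsert {V : Type} (v : V) (T : Set V) : Set (V × Fin 2) :=
  insert (v, (1 : Fin 2)) (phiSet T)

lemma sub_phiSet (T : Set V) : Subtransversal2 (phiSet T) := by
  rintro a i j ⟨u, _, hu⟩ ⟨u', _, hu'⟩
  simp only [Prod.mk.injEq] at hu hu'
  rw [← hu.2, ← hu'.2]

lemma sub_chiInsert {v : V} {T : Set V} (hv : v ∉ T) : Subtransversal2 (chiInsert v T) := by
  intro a i j hi hj
  rw [chiInsert, Set.mem_insert_iff] at hi hj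
  rcases hi with hi | ⟨u, hu, hu2⟩ <;> rcases hj with hj | ⟨u', hu', hu2'⟩
  · simp only [Prod.mk.injEq] at hi hj
    rw [hi.2, hj.2]
  · exfalso
    simp only [Prod.mk.injEq] at hi hu2'
    exact hv (by rw [← hi.1, ← hu2'.1]; exact hu')
  · exfalso
    simp only [Prod.mk.injEq] at hj hu2
    exact hv (by rw [← hj.1, ← hu2.1]; exact hu)
  · simp only [Prod.mk.injEq] at hu2 hu2'
    rw [← hu2.2, ← hu2'.2]

lemma image_phiSet (B : Matrix V V K) (T : Set V) :
    (fun j i => IAmatF K B i j) '' phiSet T = sing K '' T := by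
  unfold phiSet
  rw [Set.image_image]
  exact Set.image_congr fun u _ => col0 B u

lemma image_chiInsert (B : Matrix V V K) (v : V) (T : Set V) :
    (fun j i => IAmatF K B i j) '' chiInsert v T =
      insert (fun i => B i v) (sing K '' T) := by
  unfold chiInsert phiSet
  rw [Set.image_insert_eq, Set.image_image]
  congr 1
  exact Set.image_congr fun u _ => col0 B u

lemma colSpanRank_phiSet (B : Matrix V V K) (T : Set V) :
    colSpanRank K (IAmatF K B) (phiSet T) = T.ncard := by
  unfold colSpanRank
  rw [image_phiSet, finrank_span_sing]

lemma colSpanRank_chiInsert_dep (B : Matrix V V K) (v : V) {T : Set V}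
    (h : ∀ u, B u v ≠ 0 → u ∈ T) :
    colSpanRank K (IAmatF K B) (chiInsert v T) = T.ncard := by
  unfold colSpanRank
  rw [image_chiInsert]
  exact finrank_span_insert_dep h

lemma colSpanRank_chiInsert_indep (B : Matrix V V K) (v : V) {T : Set V} {w : V}
    (hw : w ∉ T) (hB : B w v ≠ 0) :
    colSpanRank K (IAmatF K B) (chiInsert v T) = T.ncard + 1 := by
  unfold colSpanRank
  rw [image_chiInsert]
  exact finrank_span_insert_indep hw hB

lemma IAmat_eq {V : Type} [DecidableEq V] (A : Matrix V V (ZMod 2)) :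
    IAmat A = IAmatF (ZMod 2) A := rfl

end Z2Aux

/-- If `Z₂(G)` is representable over `F`, then there is a `V × V` matrix `A'` over `F`
whose nonzero entries are exactly where `A(G)` has nonzero entries, and such that
`(I | A')` represents a matroid sheltering `Z₂(G)`. -/
theorem Z2_standard_representation
    {V : Type} [Fintype V] [DecidableEq V] (A : Matrix V V (ZMod 2))
    (hsym : A.IsSymm) (hdiag : ∀ v, A v v = 0)
    (F : Type) [Field F] (hrep : Z2Rep F A) :
    ∃ A' : Matrix V V F,
      (∀ v u : V, A' v u ≠ 0 ↔ A v u ≠ 0) ∧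
      (∀ S : Set (V × Fin 2), Subtransversal2 S →
        colSpanRank F (IAmatF F A') S = colSpanRank (ZMod 2) (IAmat A) S) := by
  classical
  obtain ⟨k, P, hP⟩ := hrep
  set g0 : V → (Fin k → F) := fun v i => P i (v, 0) with hg0
  -- rank of the φ columns of P
  have hφ : colSpanRank F P (Z2Aux.phiSet (Set.univ : Set V)) = Fintype.card V := by
    rw [hP _ (Z2Aux.sub_phiSet _), Z2Aux.IAmat_eq, Z2Aux.colSpanRank_phiSet,
      Set.ncard_univ, Nat.card_eq_fintype_card]
  unfold colSpanRank at hφ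
  have himgφ : (fun j i => P i j) '' (Z2Aux.phiSet (Set.univ : Set V)) = Set.range g0 := by
    unfold Z2Aux.phiSet
    rw [Set.image_image, Set.image_univ]
  have hindep : LinearIndependent F g0 := by
    rw [linearIndependent_iff_card_eq_finrank_span]
    show Fintype.card V = Module.finrank F ↥(Submodule.span F (Set.range g0))
    rw [← himgφ]
    exact hφ.symm
  -- the linear map sending the standard basis to the φ columns of P
  set U : (V → F) →ₗ[F] (Fin k → F) :=
    Matrix.mulVecLin (Matrix.of fun i v => P i (v, 0)) with hU
  have hUapply : ∀ x : V → F, U x = ∑ v, x v • g0 v := by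
    intro x
    funext i
    simp only [hU, Matrix.mulVecLin_apply, Matrix.mulVec, dotProduct, Matrix.of_apply,
      Finset.sum_apply, Pi.smul_apply, smul_eq_mul, hg0]
    exact Finset.sum_congr rfl fun v _ => mul_comm _ _
  have hUsing : ∀ v, U (Z2Aux.sing F v) = g0 v := by
    intro v
    rw [hUapply]
    have h : ∀ u, Z2Aux.sing F v u • g0 u = if u = v then g0 u else 0 := by
      intro u
      rw [Z2Aux.sing_apply]
      split <;> simp
    simp only [h]
    rw [Finset.sum_ite_eq' Finset.univ v g0]
    simp
  have hUinj : Function.Injective U := by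
    have h0 : ∀ x : V → F, U x = 0 → x = 0 := by
      intro x hx
      rw [hUapply] at hx
      funext v
      exact Fintype.linearIndependent_iff.mp hindep x hx v
    intro a b hab
    have := h0 (a - b) (by rw [map_sub, hab, sub_self])
    exact sub_eq_zero.mp this
  -- existence of the coefficient vectors
  have key : ∀ v : V, ∃ c : V → F, c v = 0 ∧ ∑ u, c u • g0 u = (fun i => P i (v, 1)) := by
    intro v
    have h1 := hP (Z2Aux.phiSet {u | u ≠ v}) (Z2Aux.sub_phiSet _)
    have h2 := hP (Z2Aux.chiInsert v {u | u ≠ v}) (Z2Aux.sub_chiInsert (by simp))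
    rw [Z2Aux.IAmat_eq, Z2Aux.colSpanRank_phiSet] at h1
    rw [Z2Aux.IAmat_eq, Z2Aux.colSpanRank_chiInsert_dep (K := ZMod 2) A v ?hd0] at h2
    case hd0 => exact fun u hu huv => hu (by rw [huv]; exact hdiag v)
    unfold colSpanRank at h1 h2
    have hle : Submodule.span F ((fun j i => P i j) '' Z2Aux.phiSet {u | u ≠ v}) ≤
        Submodule.span F ((fun j i => P i j) '' Z2Aux.chiInsert v {u | u ≠ v}) :=
      Submodule.span_mono (Set.image_mono (Set.subset_insert _ _))
    have heq := Submodule.eq_of_le_of_finrank_le hle (le_of_eq (h2.trans h1.symm))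
    have hmem : (fun i => P i (v, 1)) ∈
        Submodule.span F ((fun j i => P i j) '' Z2Aux.phiSet {u | u ≠ v}) := by
      rw [heq]
      exact Submodule.subset_span ⟨(v, 1), Set.mem_insert _ _, rfl⟩
    have himg : (fun j i => P i j) '' Z2Aux.phiSet {u | u ≠ v} = g0 '' {u | u ≠ v} := by
      unfold Z2Aux.phiSet
      rw [Set.image_image]
      try exact Set.image_congr fun u _ => rfl
    rw [himg, Finsupp.mem_span_image_iff_linearCombination] at hmem
    obtain ⟨l, hl, hsum⟩ := hmem
    refine ⟨fun u => l u, ?_, ?_⟩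
    · by_contra h0
      exact ((Finsupp.mem_supported F l).mp hl)
        (Finset.mem_coe.mpr (Finsupp.mem_support_iff.mpr h0)) rfl
    · rw [Finsupp.linearCombination_apply] at hsum
      have hsf := Finsupp.sum_fintype l (fun i a => a • g0 i)
        (fun i => zero_smul F (g0 i))
      rw [hsf] at hsum
      exact hsum
  choose cc hcc0 hccsum using key
  set A' : Matrix V V F := Matrix.of fun w u => cc u w with hA'def
  have hA'entry : ∀ w u, A' w u = cc u w := fun w u => by rw [hA'def]; rfl
  -- transfer of ranks from (I | A') to P
  have hUg : ∀ p : V × Fin 2, U (fun i => IAmatF F A' i p) = fun i => P i p := by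
    rintro ⟨u, b⟩
    have hb : b = 0 ∨ b = 1 := by omega
    rcases hb with rfl | rfl
    · rw [Z2Aux.col0]
      exact hUsing u
    · rw [Z2Aux.col1]
      have he : (fun i => A' i u) = fun i => cc u i := by
        funext i; exact hA'entry i u
      rw [he, hUapply]
      exact hccsum u
  have htrans : ∀ S : Set (V × Fin 2),
      colSpanRank F (IAmatF F A') S = colSpanRank F P S := by
    intro S
    unfold colSpanRank
    have himg : (fun j i => P i j) '' S = ⇑U '' ((fun j i => IAmatF F A' i j) '' S) := by
      rw [Set.image_image]
      exact Set.image_congr fun p _ => (hUg p).symm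
    rw [himg, Submodule.span_image]
    exact LinearEquiv.finrank_eq (Submodule.equivMapOfInjective U hUinj _)
  refine ⟨A', ?_, fun S hS => (htrans S).trans (hP S hS)⟩
  intro v u
  by_cases hvu : v = u
  · subst hvu
    rw [hA'entry v v, hcc0 v, hdiag v]
    simp
  · have h3 := (htrans (Z2Aux.chiInsert u {x | x ≠ u ∧ x ≠ v})).trans
      (hP _ (Z2Aux.sub_chiInsert (by simp)))
    rw [Z2Aux.IAmat_eq] at h3
    have hA'diag : A' u u = 0 := by rw [hA'entry u u]; exact hcc0 u
    by_cases hA : A v u = 0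
    · rw [Z2Aux.colSpanRank_chiInsert_dep (K := ZMod 2) A u ?hd] at h3
      case hd =>
        intro w hw
        refine ⟨fun hwu => hw (by rw [hwu]; exact hdiag u),
          fun hwv => hw (by rw [hwv]; exact hA)⟩
      by_cases hA' : A' v u = 0
      · simp [hA, hA']
      · exfalso
        rw [Z2Aux.colSpanRank_chiInsert_indep (K := F) A' u (w := v)
          (by simp [hvu]) hA'] at h3
        omega
    · rw [Z2Aux.colSpanRank_chiInsert_indep (K := ZMod 2) A u (w := v)
        (by simp) hA] at h3
      by_cases hA' : A' v u = 0
      · exfalso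
        rw [Z2Aux.colSpanRank_chiInsert_dep (K := F) A' u ?hd2] at h3
        case hd2 =>
          intro w hw
          refine ⟨fun hwu => hw (by rw [hwu]; exact hA'diag),
            fun hwv => hw (by rw [hwv]; exact hA')⟩
        omega
      · simp [hA, hA']
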